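/- Suppose a 4-element clique exists in the circulant graph on ℤ/(6m+1)ℤ with connection set D = {±m, ±(5m+1)} ∪ {±d : 2m+1 ≤ d ≤ 4m} (m ≥ 2), and let g₁, g₂, g₃, g₄ be the forward cyclic gaps between consecutive clique vertices in cyclic order, so g₁+g₂+g₃+g₄ = 6m+1 with each gᵢ ∈ {m, 5m+1} ∪ [2m+1, 4m]. Then at least three of the gaps equal m, and hence two cyclically consecutive gaps equal m; since 2m is not in the difference set, no such clique exists. -/

import Mathlib

/-- The cyclic distance ‖x‖ = min(x mod n, n − (x mod n)) for x ∈ ℤ/nℤ. -/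
def cyclicDist (n : ℕ) (x : ZMod n) : ℕ := min x.val (n - x.val)

/-- The circulant graph on `ZMod n` with distance set `S`: `x ~ y` iff `‖x - y‖ ∈ S`. -/
def circ (n : ℕ) (S : Set ℕ) : SimpleGraph (ZMod n) :=
  SimpleGraph.fromRel (fun x y => cyclicDist n (x - y) ∈ S)

/-- `G` is `R(s,t)`-good: no clique of size `s` and no independent set of size `t`. -/
def RGood {V : Type*} (s t : ℕ) (G : SimpleGraph V) : Prop :=
  G.CliqueFree s ∧ Gᶜ.CliqueFree t

/-- `G` is doubly saturated `R(s,t)`-good. -/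
def DoublySaturated {V : Type*} (s t : ℕ) (G : SimpleGraph V) : Prop :=
  RGood s t G ∧
  (∀ u v : V, u ≠ v → ¬ G.Adj u v → ¬ (G ⊔ SimpleGraph.edge u v).CliqueFree s) ∧
  (∀ u v : V, G.Adj u v → ¬ ((G.deleteEdges {s(u, v)})ᶜ.CliqueFree t)) ∧
  G ≠ ⊤ ∧ Gᶜ ≠ ⊤

theorem stmt_15 (m : ℕ) (hm : 2 ≤ m)
    -- the symmetric connection set D = {±m, ±(5m+1)} ∪ {±d : 2m+1 ≤ d ≤ 4m},
    -- which as a set of residues mod 6m+1 equals {m, 5m+1} ∪ [2m+1, 4m]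
    (D : Set ℕ) (hD : D = {m, 5 * m + 1} ∪ Set.Icc (2 * m + 1) (4 * m))
    (v : Fin 4 → ZMod (6 * m + 1))
    (hclique : ∀ i j : Fin 4, i ≠ j → ((v i - v j).val ∈ D))
    (g : Fin 4 → ℕ) (hg : ∀ i : Fin 4, g i = (v (i + 1) - v i).val)
    (hsum : g 0 + g 1 + g 2 + g 3 = 6 * m + 1) :
    (3 ≤ (Finset.univ.filter (fun i : Fin 4 => g i = m)).card ∧
      ∃ i : Fin 4, g i = m ∧ g (i + 1) = m) ∧ False := by
  subst hD
  have hmem : ∀ i : Fin 4, g i = m ∨ g i = 5*m+1 ∨ (2*m+1 ≤ g i ∧ g i ≤ 4*m) := by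
    intro i
    have hne : i + 1 ≠ i := by revert i; decide
    have := hclique (i+1) i hne
    rw [← hg i] at this
    simp [Set.mem_Icc] at this; tauto
  have hne2 : ∀ j : Fin 4, j + 2 ≠ j := by decide
  have key : ∀ i : Fin 4, g i = m → g (i+1) = m → False := by
    intro i h1 h2
    have h2' : (v (i+2) - v (i+1)).val = m := by
      have := hg (i+1)
      have e : i + 1 + 1 = i + 2 := (by decide : ∀ j : Fin 4, j + 1 + 1 = j + 2) i
      rw [e] at this
      omega
    have h1' : (v (i+1) - v i).val = m := by rw [← hg i]; exact h1
    have e : v (i+2) - v i = (v (i+2) - v (i+1)) + (v (i+1) - v i) := by ring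
    have hval : (v (i+2) - v i).val = m + m := by
      rw [e, ZMod.val_add_of_lt (by rw [h1', h2']; omega), h1', h2']
    have := hclique (i+2) i (hne2 i)
    rw [hval] at this
    simp [Set.mem_Icc] at this
    omega
  have h0 := hmem 0; have h1 := hmem 1; have h2 := hmem 2; have h3 := hmem 3
  have hadj : (g 0 = m ∧ g 1 = m) ∨ (g 1 = m ∧ g 2 = m) ∨ (g 2 = m ∧ g 3 = m) := by
    omega
  have hF : False := by
    rcases hadj with ⟨a, b⟩ | ⟨a, b⟩ | ⟨a, b⟩
    · exact key 0 a b
    · exact key 1 a b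
    · exact key 2 a b
  exact hF.elim
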